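/- Let G be a group and φ : G → G an injective group homomorphism such that the set G/φ(G) of left cosets of φ(G) in G is finite. Then for every n ∈ ℕ the coset space G/φ^n(G) is finite, and its cardinality equals [G : φ(G)]^n, the n-th power of the number of left cosets of φ(G) in G. -/

import Mathlib

/-- `φ^n(G)` as a subgroup of `G`. -/
def rng {G : Type*} [Group G] (φ : Monoid.End G) (n : ℕ) : Subgroup G :=
  MonoidHom.range ((φ ^ n : Monoid.End G) : G →* G)

lemma rng_succ {G : Type*} [Group G] (φ : Monoid.End G) (n : ℕ) :
    rng φ (n + 1) = (rng φ n).map (φ : G →* G) := by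
  have : (φ ^ (n + 1) : Monoid.End G) = (φ : G →* G).comp (φ ^ n : Monoid.End G) := by
    rw [pow_succ']; rfl
  simp only [rng, this, MonoidHom.range_comp]
  exact MonoidHom.range_comp _ _

lemma index_rng {G : Type*} [Group G] (φ : Monoid.End G)
    (hinj : Function.Injective φ) (n : ℕ) :
    (rng φ n).index = (rng φ 1).index ^ n := by
  induction n with
  | zero =>
    have : rng φ 0 = ⊤ := by
      simp [rng, MonoidHom.range_eq_top]
      exact MonoidHom.range_eq_top.mpr fun x => ⟨x, rfl⟩
    simp [this]
  | succ n ih =>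
    rw [rng_succ, Subgroup.index_map_of_injective _ hinj, ih]
    have : (φ : G →* G).range = rng φ 1 := by
      simp [rng, pow_one]
    rw [this, pow_succ]

/-- **Statement 4.** If `φ : G → G` is an injective endomorphism with `G/φ(G)` finite,
then for every `n` the coset space `G/φ^n(G)` is finite, of cardinality
`[G : φ(G)]^n`. -/
theorem card_quotient_pow_range (G : Type*) [Group G] (φ : Monoid.End G)
    (hinj : Function.Injective φ) (hfin : Finite (G ⧸ rng φ 1)) :
    ∀ n : ℕ, Finite (G ⧸ rng φ n) ∧
      Nat.card (G ⧸ rng φ n) = (Nat.card (G ⧸ rng φ 1)) ^ n := by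
  intro n
  have h1 : (rng φ 1).index ≠ 0 := Subgroup.index_ne_zero_of_finite
  have hn : (rng φ n).index = (rng φ 1).index ^ n := index_rng φ hinj n
  have hne : (rng φ n).index ≠ 0 := by
    rw [hn]; exact pow_ne_zero _ h1
  have hfinn : Finite (G ⧸ rng φ n) := by
    rw [Subgroup.index_eq_card] at hne
    exact Nat.finite_of_card_ne_zero hne
  exact ⟨hfinn, by rw [← Subgroup.index_eq_card, ← Subgroup.index_eq_card, hn]⟩
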